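/- Assume P ≠ 0. Then the set 𝒞̄ := { Cᵀq : q ∈ ℝ^M, qᵀP ≤ 0 } is a closed convex cone in ℝ^N and equals the topological closure of the set 𝒞 := { Cᵀq : q ∈ ℝ^M, qᵀP < 0 }. -/

import Mathlib

open Matrix BigOperators

/-- Auxiliary: closedness of the cone `{vecMul q C : q ⬝ᵥ P ≤ 0}`. -/
lemma stmt_10_aux_closed (M N : ℕ)
    (P : Fin M → ℝ) (C : Matrix (Fin M) (Fin N) ℝ) (hP : P ≠ 0) :
    IsClosed {w : Fin N → ℝ | ∃ q : Fin M → ℝ, w = Matrix.vecMul q C ∧ q ⬝ᵥ P ≤ 0} := by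
  classical
  set f : (Fin M → ℝ) →ₗ[ℝ] (Fin N → ℝ) := C.vecMulLinear with hf
  have hPP : (0 : ℝ) < P ⬝ᵥ P := by
    have h0 : (0:ℝ) ≤ P ⬝ᵥ P := Finset.sum_nonneg fun i _ => mul_self_nonneg (P i)
    exact h0.lt_of_ne fun h => hP (dotProduct_self_eq_zero.mp h.symm)
  set φ : (Fin M → ℝ) →ₗ[ℝ] ℝ :=
    { toFun := fun q => q ⬝ᵥ P
      map_add' := fun a b => add_dotProduct a b P
      map_smul' := fun c a => smul_dotProduct c a P } with hφ
  set W : Submodule ℝ (Fin N → ℝ) := (LinearMap.ker φ).map f with hW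
  set v : Fin N → ℝ := f (-P) with hv
  have hset : {w : Fin N → ℝ | ∃ q : Fin M → ℝ, w = Matrix.vecMul q C ∧ q ⬝ᵥ P ≤ 0}
      = {w : Fin N → ℝ | ∃ x ∈ W, ∃ c : ℝ, 0 ≤ c ∧ w = x + c • v} := by
    ext w
    constructor
    · rintro ⟨q, rfl, hq⟩
      obtain ⟨c, hc⟩ : ∃ c : ℝ, c = (-(q ⬝ᵥ P)) / (P ⬝ᵥ P) := ⟨_, rfl⟩
      have hc0 : 0 ≤ c := by rw [hc]; exact div_nonneg (by linarith) hPP.le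
      have hq0P : (q + c • P) ⬝ᵥ P = 0 := by
        rw [add_dotProduct, smul_dotProduct, smul_eq_mul, hc]
        field_simp
        ring
      have hdecomp : (q + c • P) + c • (-P) = q := by ext i; simp
      refine ⟨f (q + c • P), ⟨q + c • P, hq0P, rfl⟩, c, hc0, ?_⟩
      calc Matrix.vecMul q C = f q := rfl
        _ = f ((q + c • P) + c • (-P)) := by rw [hdecomp]
        _ = f (q + c • P) + c • v := by rw [map_add, f.map_smul]
    · rintro ⟨x, ⟨q₀, hq₀, rfl⟩, c, hc, rfl⟩
      have h0 : q₀ ⬝ᵥ P = 0 := hq₀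
      refine ⟨q₀ + c • (-P), ?_, ?_⟩
      · show f q₀ + c • v = Matrix.vecMul (q₀ + c • (-P)) C
        calc f q₀ + c • v = f (q₀ + c • (-P)) := by rw [map_add, f.map_smul]
          _ = Matrix.vecMul (q₀ + c • (-P)) C := rfl
      · rw [add_dotProduct, smul_dotProduct, neg_dotProduct, h0, smul_eq_mul]
        simpa using mul_nonneg hc hPP.le
  rw [hset]
  by_cases hvW : v ∈ W
  · have : {w : Fin N → ℝ | ∃ x ∈ W, ∃ c : ℝ, 0 ≤ c ∧ w = x + c • v} = (W : Set (Fin N → ℝ)) := by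
      ext w
      constructor
      · rintro ⟨x, hx, c, hc, rfl⟩; exact W.add_mem hx (W.smul_mem c hvW)
      · intro hw; exact ⟨w, hw, 0, le_refl 0, by simp⟩
    rw [this]
    exact Submodule.closed_of_finiteDimensional W
  · set T : (W × ℝ) →ₗ[ℝ] (Fin N → ℝ) :=
      LinearMap.coprod W.subtype (LinearMap.toSpanSingleton ℝ _ v) with hT
    have hTapp : ∀ p : W × ℝ, T p = (p.1 : Fin N → ℝ) + p.2 • v := fun p => rfl
    have hker : LinearMap.ker T = ⊥ := by
      rw [LinearMap.ker_eq_bot']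
      rintro ⟨x, c⟩ h
      rw [hTapp] at h
      simp only at h
      have hc : c = 0 := by
        by_contra hc
        apply hvW
        have hx : v = (-c⁻¹) • (x : Fin N → ℝ) := by
          have h2 := congrArg (fun w => c⁻¹ • w) h
          simp only [smul_add, smul_smul, inv_mul_cancel₀ hc, one_smul, smul_zero] at h2
          have h3 : v = -(c⁻¹ • (x : Fin N → ℝ)) := by
            rw [eq_neg_iff_add_eq_zero, add_comm]; exact h2
          rw [h3, neg_smul]
        rw [hx]
        exact W.smul_mem _ x.2
      subst hc
      simp only [zero_smul, add_zero] at h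
      exact Prod.ext_iff.mpr ⟨Subtype.ext h, rfl⟩
    have hemb : Topology.IsClosedEmbedding T :=
      LinearMap.isClosedEmbedding_of_injective hker
    have himg : {w : Fin N → ℝ | ∃ x ∈ W, ∃ c : ℝ, 0 ≤ c ∧ w = x + c • v}
        = T '' (Set.univ ×ˢ Set.Ici (0 : ℝ)) := by
      ext w
      constructor
      · rintro ⟨x, hx, c, hc, rfl⟩
        exact ⟨(⟨x, hx⟩, c), ⟨Set.mem_univ _, hc⟩, by rw [hTapp]⟩
      · rintro ⟨⟨x, c⟩, ⟨-, hc⟩, rfl⟩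
        exact ⟨x, x.2, c, hc, (hTapp _)⟩
    rw [himg]
    exact hemb.isClosedMap _ (isClosed_univ.prod isClosed_Ici)

/-- If `P ≠ 0`, then `𝒞̄ = {Cᵀq : qᵀP ≤ 0}` is a closed convex cone in `ℝ^N`
and equals the topological closure of `𝒞 = {Cᵀq : qᵀP < 0}`. -/
theorem stmt_10 (M N : ℕ) (hM : 1 ≤ M) (hN : 1 ≤ N)
    (P : Fin M → ℝ) (C : Matrix (Fin M) (Fin N) ℝ) (hP : P ≠ 0) :
    IsClosed {w : Fin N → ℝ | ∃ q : Fin M → ℝ, w = Matrix.vecMul q C ∧ q ⬝ᵥ P ≤ 0} ∧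
    Convex ℝ {w : Fin N → ℝ | ∃ q : Fin M → ℝ, w = Matrix.vecMul q C ∧ q ⬝ᵥ P ≤ 0} ∧
    (∀ (c : ℝ), 0 ≤ c →
      ∀ w ∈ {w : Fin N → ℝ | ∃ q : Fin M → ℝ, w = Matrix.vecMul q C ∧ q ⬝ᵥ P ≤ 0},
        c • w ∈ {w : Fin N → ℝ | ∃ q : Fin M → ℝ, w = Matrix.vecMul q C ∧ q ⬝ᵥ P ≤ 0}) ∧
    {w : Fin N → ℝ | ∃ q : Fin M → ℝ, w = Matrix.vecMul q C ∧ q ⬝ᵥ P ≤ 0} =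
      closure {w : Fin N → ℝ | ∃ q : Fin M → ℝ, w = Matrix.vecMul q C ∧ q ⬝ᵥ P < 0} := by
  have hclosed := stmt_10_aux_closed M N P C hP
  have hPP : (0 : ℝ) < P ⬝ᵥ P := by
    have h0 : (0:ℝ) ≤ P ⬝ᵥ P := Finset.sum_nonneg fun i _ => mul_self_nonneg (P i)
    exact h0.lt_of_ne fun h => hP (dotProduct_self_eq_zero.mp h.symm)
  refine ⟨hclosed, ?_, ?_, ?_⟩
  · rintro w₁ ⟨q₁, rfl, h₁⟩ w₂ ⟨q₂, rfl, h₂⟩ a b ha hb hab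
    refine ⟨a • q₁ + b • q₂, ?_, ?_⟩
    · rw [Matrix.add_vecMul, Matrix.smul_vecMul, Matrix.smul_vecMul]
    · rw [add_dotProduct, smul_dotProduct, smul_dotProduct, smul_eq_mul, smul_eq_mul]
      nlinarith
  · rintro c hc w ⟨q, rfl, hq⟩
    refine ⟨c • q, by rw [Matrix.smul_vecMul], ?_⟩
    rw [smul_dotProduct, smul_eq_mul]
    exact mul_nonpos_of_nonneg_of_nonpos hc hq
  · apply Set.Subset.antisymm
    · rintro w ⟨q, rfl, hq⟩
      have hfun : (fun t : ℝ => Matrix.vecMul (q + t • (-P)) C)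
          = fun t : ℝ => Matrix.vecMul q C + t • Matrix.vecMul (-P) C := by
        funext t; rw [Matrix.add_vecMul, Matrix.smul_vecMul]
      have hconv : Filter.Tendsto (fun t : ℝ => Matrix.vecMul (q + t • (-P)) C)
          (nhdsWithin 0 (Set.Ioi 0)) (nhds (Matrix.vecMul q C)) := by
        rw [hfun]
        have hcont : Continuous fun t : ℝ => Matrix.vecMul q C + t • Matrix.vecMul (-P) C :=
          continuous_const.add (continuous_id.smul continuous_const)
        have := hcont.tendsto 0
        simp only [zero_smul, add_zero] at this
        exact this.mono_left nhdsWithin_le_nhds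
      refine mem_closure_of_tendsto hconv ?_
      filter_upwards [self_mem_nhdsWithin] with t ht
      refine ⟨q + t • (-P), rfl, ?_⟩
      rw [add_dotProduct, smul_dotProduct, neg_dotProduct, smul_eq_mul]
      have : 0 < t * (P ⬝ᵥ P) := mul_pos ht hPP
      linarith
    · apply hclosed.closure_subset_iff.mpr
      rintro w ⟨q, rfl, hq⟩
      exact ⟨q, rfl, hq.le⟩
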